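/- Let $T : C_b([\epsilon, \epsilon+\delta]\times S) \to C_b([\epsilon,\epsilon+\delta]\times S)$ be defined by $Tf(\eta,i) = e^{\frac{\epsilon}{\alpha}\|r\|_\infty} + \frac{1}{\alpha}\int_\epsilon^\eta \inf_{v_1}\sup_{v_2}[\frac{1}{\theta}\Pi_{v_1,v_2}f(\theta,i) + r(i,v_1,v_2)f(\theta,i)]\,d\theta$. Then for all $f_1,f_2$, $\|Tf_1 - Tf_2\|_\infty \le \frac{1}{\alpha}[\|r\|_\infty\delta + 2M\ln(1+\delta/\epsilon)]\,\|f_1-f_2\|_\infty$. In particular, if $\delta>0$ is small enough that $\frac{1}{\alpha}[\|r\|_\infty\delta + 2M\ln(1+\delta/\epsilon)] < 1$, then $T$ is a contraction and has a unique fixed point. -/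

import Mathlib

open MeasureTheory Set

set_option linter.unusedSectionVars false
set_option linter.unusedVariables false
set_option maxHeartbeats 1000000



section InfSup
variable {V1 V2 : Type} [Nonempty V1] [Nonempty V2]

lemma infsup_le_add (A A' : V1 → V2 → ℝ) (B B' c : ℝ)
    (hA : ∀ v1 v2, |A v1 v2| ≤ B) (hA' : ∀ v1 v2, |A' v1 v2| ≤ B')
    (h : ∀ v1 v2, A v1 v2 ≤ A' v1 v2 + c) :
    (⨅ v1, ⨆ v2, A v1 v2) ≤ (⨅ v1, ⨆ v2, A' v1 v2) + c := by
  have bddA : ∀ v1, BddAbove (Set.range (A v1)) :=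
    fun v1 => ⟨B, by rintro x ⟨v2, rfl⟩; exact (abs_le.1 (hA v1 v2)).2⟩
  have bddA' : ∀ v1, BddAbove (Set.range (A' v1)) :=
    fun v1 => ⟨B', by rintro x ⟨v2, rfl⟩; exact (abs_le.1 (hA' v1 v2)).2⟩
  have bddI : BddBelow (Set.range (fun v1 => ⨆ v2, A v1 v2)) := by
    refine ⟨-B, ?_⟩
    rintro x ⟨v1, rfl⟩
    have := le_ciSup (bddA v1) (Classical.arbitrary V2)
    exact le_trans (abs_le.1 (hA v1 (Classical.arbitrary V2))).1 this
  have key : ∀ v1, (⨅ v1, ⨆ v2, A v1 v2) - c ≤ ⨆ v2, A' v1 v2 := by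
    intro v1
    have h1 : (⨅ v1, ⨆ v2, A v1 v2) ≤ ⨆ v2, A v1 v2 := ciInf_le bddI v1
    have h2 : (⨆ v2, A v1 v2) ≤ (⨆ v2, A' v1 v2) + c := by
      refine ciSup_le fun v2 => ?_
      exact le_trans (h v1 v2) (add_le_add_left (le_ciSup (bddA' v1) v2) c)
    linarith
  have := le_ciInf key
  linarith [this]

lemma abs_infsup_sub_le (A A' : V1 → V2 → ℝ) (B B' c : ℝ)
    (hA : ∀ v1 v2, |A v1 v2| ≤ B) (hA' : ∀ v1 v2, |A' v1 v2| ≤ B')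
    (h : ∀ v1 v2, |A v1 v2 - A' v1 v2| ≤ c) :
    |(⨅ v1, ⨆ v2, A v1 v2) - (⨅ v1, ⨆ v2, A' v1 v2)| ≤ c := by
  have h1 := infsup_le_add A A' B B' c hA hA' (fun v1 v2 => by
    have := (abs_le.1 (h v1 v2)).2; linarith)
  have h2 := infsup_le_add A' A B' B c hA' hA (fun v1 v2 => by
    have := (abs_le.1 (h v1 v2)).1; linarith)
  rw [abs_le]; constructor <;> linarith

lemma abs_infsup_le (A : V1 → V2 → ℝ) (B : ℝ)
    (hA : ∀ v1 v2, |A v1 v2| ≤ B) :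
    |⨅ v1, ⨆ v2, A v1 v2| ≤ B := by
  have h0 : ∀ (v1 : V1) (v2 : V2), |(0:ℝ)| ≤ (0:ℝ) := by simp
  have := abs_infsup_sub_le A (fun _ _ => (0:ℝ)) B 0 B hA h0 (fun v1 v2 => by
    simpa using hA v1 v2)
  simpa using this

end InfSup



section Row
variable {V1 V2 : Type} [Nonempty V1] [Nonempty V2]
variable {M : ℝ} {π : ℕ → ℕ → V1 → V2 → ℝ}

lemma row_summable (hπcons : ∀ i v1 v2, HasSum (fun j => π i j v1 v2) 0)
    (i : ℕ) (v1 : V1) (v2 : V2) : Summable (fun j => π i j v1 v2) :=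
  ⟨0, hπcons i v1 v2⟩

lemma row_abs_summable (hπcons : ∀ i v1 v2, HasSum (fun j => π i j v1 v2) 0)
    (i : ℕ) (v1 : V1) (v2 : V2) : Summable (fun j => |π i j v1 v2|) :=
  summable_abs_iff.2 (row_summable hπcons i v1 v2)

lemma row_abs_tsum_le
    (hπoff : ∀ i j v1 v2, i ≠ j → 0 ≤ π i j v1 v2)
    (hπcons : ∀ i v1 v2, HasSum (fun j => π i j v1 v2) 0)
    (hπM : ∀ i v1 v2, -π i i v1 v2 ≤ M)
    (i : ℕ) (v1 : V1) (v2 : V2) : ∑' j, |π i j v1 v2| ≤ 2 * M := by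
  set p : ℕ → ℝ := fun j => π i j v1 v2 with hp
  have hsum : Summable p := row_summable hπcons i v1 v2
  have habs : Summable (fun j => |p j|) := row_abs_summable hπcons i v1 v2
  have htot : ∑' j, p j = 0 := (hπcons i v1 v2).tsum_eq
  have h1 : ∑' j, |p j| = |p i| + ∑' j, if j = i then 0 else |p j| :=
    Summable.tsum_eq_add_tsum_ite habs i
  have h2 : ∑' j, p j = p i + ∑' j, if j = i then 0 else p j :=
    Summable.tsum_eq_add_tsum_ite hsum i
  have heq : (fun j => if j = i then 0 else |p j|) = (fun j => if j = i then 0 else p j) := by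
    funext j
    by_cases hj : j = i
    · simp [hj]
    · simp only [hj, if_false]
      exact abs_of_nonneg (hπoff i j v1 v2 (fun h => hj h.symm))
  have hpi_nonpos : p i ≤ 0 := by
    have : (0:ℝ) ≤ ∑' j, if j = i then 0 else p j := by
      refine tsum_nonneg fun j => ?_
      by_cases hj : j = i
      · simp [hj]
      · simp only [hj, if_false]
        exact hπoff i j v1 v2 (fun h => hj h.symm)
    rw [htot] at h2
    linarith
  have hMi : -p i ≤ M := hπM i v1 v2
  calc ∑' j, |p j| = |p i| + ∑' j, if j = i then 0 else |p j| := h1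
    _ = |p i| + ∑' j, if j = i then 0 else p j := by rw [heq]
    _ = |p i| + (0 - p i) := by
        have h2' : (∑' j, if j = i then 0 else p j) = 0 - p i := by
          rw [htot] at h2; linarith
        rw [h2']
    _ = -p i + (0 - p i) := by rw [abs_of_nonpos hpi_nonpos]
    _ ≤ 2 * M := by linarith

lemma row_mul_summable (hπcons : ∀ i v1 v2, HasSum (fun j => π i j v1 v2) 0)
    (i : ℕ) (v1 : V1) (v2 : V2) (x : ℕ → ℝ) {C : ℝ} (hx : ∀ j, |x j| ≤ C) :
    Summable (fun j => π i j v1 v2 * x j) := by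
  have habs : Summable (fun j => |π i j v1 v2| * C) :=
    (row_abs_summable hπcons i v1 v2).mul_right C
  refine (summable_abs_iff (f := fun j => π i j v1 v2 * x j)).1 ?_
  refine Summable.of_nonneg_of_le (fun j => abs_nonneg _) (fun j => ?_) habs
  rw [abs_mul]
  exact mul_le_mul_of_nonneg_left (hx j) (abs_nonneg _)

lemma row_tsum_bound
    (hπoff : ∀ i j v1 v2, i ≠ j → 0 ≤ π i j v1 v2)
    (hπcons : ∀ i v1 v2, HasSum (fun j => π i j v1 v2) 0)
    (hπM : ∀ i v1 v2, -π i i v1 v2 ≤ M)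
    (i : ℕ) (v1 : V1) (v2 : V2) (x : ℕ → ℝ) {C : ℝ} (hx : ∀ j, |x j| ≤ C) (hC : 0 ≤ C) :
    |∑' j, π i j v1 v2 * x j| ≤ 2 * M * C := by
  set q : ℕ → ℝ := fun j => π i j v1 v2 * x j with hq
  have hsum : Summable q := row_mul_summable hπcons i v1 v2 x hx
  have habs : Summable (fun j => |q j|) := summable_abs_iff.2 hsum
  have habs' : Summable (fun j => ‖q j‖) := by simpa [Real.norm_eq_abs] using habs
  have h0 : |∑' j, q j| ≤ ∑' j, |q j| := by
    have := norm_tsum_le_tsum_norm habs'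
    simpa [Real.norm_eq_abs] using this
  have h1 : ∑' j, |q j| ≤ ∑' j, |π i j v1 v2| * C := by
    refine Summable.tsum_le_tsum (fun j => ?_) habs ((row_abs_summable hπcons i v1 v2).mul_right C)
    rw [hq, abs_mul]
    exact mul_le_mul_of_nonneg_left (hx j) (abs_nonneg _)
  have h2 : ∑' j, |π i j v1 v2| * C = (∑' j, |π i j v1 v2|) * C := tsum_mul_right
  have h3 := row_abs_tsum_le hπoff hπcons hπM i v1 v2
  have h4 : (∑' j, |π i j v1 v2|) * C ≤ 2 * M * C := mul_le_mul_of_nonneg_right h3 hC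
  calc |∑' j, q j| ≤ ∑' j, |q j| := h0
    _ ≤ ∑' j, |π i j v1 v2| * C := h1
    _ = (∑' j, |π i j v1 v2|) * C := h2
    _ ≤ 2 * M * C := h4

lemma row_tsum_sub (hπcons : ∀ i v1 v2, HasSum (fun j => π i j v1 v2) 0)
    (i : ℕ) (v1 : V1) (v2 : V2) (x x' : ℕ → ℝ) {C C' : ℝ}
    (hx : ∀ j, |x j| ≤ C) (hx' : ∀ j, |x' j| ≤ C') :
    ∑' j, π i j v1 v2 * x j - ∑' j, π i j v1 v2 * x' j
      = ∑' j, π i j v1 v2 * (x j - x' j) := by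
  rw [← Summable.tsum_sub (row_mul_summable hπcons i v1 v2 x hx) (row_mul_summable hπcons i v1 v2 x' hx')]
  congr 1; funext j; ring

end Row



section Gam
variable {V1 V2 : Type} [Nonempty V1] [Nonempty V2]
variable {M rM : ℝ} {π : ℕ → ℕ → V1 → V2 → ℝ} {r : ℕ → V1 → V2 → ℝ}

noncomputable def Gam (π : ℕ → ℕ → V1 → V2 → ℝ) (r : ℕ → V1 → V2 → ℝ)
    (i : ℕ) (x : ℕ → ℝ) (s : ℝ) : ℝ :=
  ⨅ v1, ⨆ v2, (s * ∑' j, π i j v1 v2 * x j + r i v1 v2 * x i)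

section lems
variable (hπoff : ∀ i j v1 v2, i ≠ j → 0 ≤ π i j v1 v2)
  (hπcons : ∀ i v1 v2, HasSum (fun j => π i j v1 v2) 0)
  (hπM : ∀ i v1 v2, -π i i v1 v2 ≤ M)
  (hr0 : ∀ i v1 v2, 0 ≤ r i v1 v2) (hrM : ∀ i v1 v2, r i v1 v2 ≤ rM)

include hπoff hπcons hπM hr0 hrM

lemma pair_bound (i : ℕ) (v1 : V1) (v2 : V2) (x : ℕ → ℝ) (s : ℝ) {C : ℝ}
    (hx : ∀ j, |x j| ≤ C) (hC : 0 ≤ C) :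
    |s * ∑' j, π i j v1 v2 * x j + r i v1 v2 * x i| ≤ |s| * (2 * M * C) + rM * C := by
  have h1 : |s * ∑' j, π i j v1 v2 * x j| ≤ |s| * (2 * M * C) := by
    rw [abs_mul]
    exact mul_le_mul_of_nonneg_left (row_tsum_bound hπoff hπcons hπM i v1 v2 x hx hC)
      (abs_nonneg s)
  have h2 : |r i v1 v2 * x i| ≤ rM * C := by
    rw [abs_mul, abs_of_nonneg (hr0 i v1 v2)]
    exact mul_le_mul (hrM i v1 v2) (hx i) (abs_nonneg _) (le_trans (hr0 0 v1 v2) (hrM 0 v1 v2))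
  calc |s * ∑' j, π i j v1 v2 * x j + r i v1 v2 * x i|
      ≤ |s * ∑' j, π i j v1 v2 * x j| + |r i v1 v2 * x i| := abs_add_le _ _
    _ ≤ |s| * (2 * M * C) + rM * C := add_le_add h1 h2

lemma Gam_bound (i : ℕ) (x : ℕ → ℝ) (s : ℝ) {C : ℝ}
    (hx : ∀ j, |x j| ≤ C) (hC : 0 ≤ C) :
    |Gam π r i x s| ≤ |s| * (2 * M * C) + rM * C := by
  exact abs_infsup_le _ _ (fun v1 v2 => pair_bound hπoff hπcons hπM hr0 hrM i v1 v2 x s hx hC)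

lemma Gam_sub_x (i : ℕ) (x x' : ℕ → ℝ) (s : ℝ) {C C' K : ℝ}
    (hx : ∀ j, |x j| ≤ C) (hC : 0 ≤ C) (hx' : ∀ j, |x' j| ≤ C') (hC' : 0 ≤ C')
    (hK : ∀ j, |x j - x' j| ≤ K) (hK0 : 0 ≤ K) :
    |Gam π r i x s - Gam π r i x' s| ≤ |s| * (2 * M * K) + rM * K := by
  refine abs_infsup_sub_le _ _ (|s| * (2 * M * C) + rM * C) (|s| * (2 * M * C') + rM * C') _
    (fun v1 v2 => pair_bound hπoff hπcons hπM hr0 hrM i v1 v2 x s hx hC)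
    (fun v1 v2 => pair_bound hπoff hπcons hπM hr0 hrM i v1 v2 x' s hx' hC')
    (fun v1 v2 => ?_)
  have heq : s * ∑' j, π i j v1 v2 * x j + r i v1 v2 * x i
      - (s * ∑' j, π i j v1 v2 * x' j + r i v1 v2 * x' i)
      = s * ∑' j, π i j v1 v2 * (x j - x' j) + r i v1 v2 * (x i - x' i) := by
    rw [mul_sub]
    have := row_tsum_sub hπcons i v1 v2 x x' hx hx'
    rw [← this]
    ring
  rw [heq]
  exact pair_bound hπoff hπcons hπM hr0 hrM i v1 v2 (fun j => x j - x' j) s hK hK0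

lemma Gam_sub_s (i : ℕ) (x : ℕ → ℝ) (s s' : ℝ) {C : ℝ}
    (hx : ∀ j, |x j| ≤ C) (hC : 0 ≤ C) :
    |Gam π r i x s - Gam π r i x s'| ≤ |s - s'| * (2 * M * C) := by
  have h := abs_infsup_sub_le
    (fun v1 v2 => s * ∑' j, π i j v1 v2 * x j + r i v1 v2 * x i)
    (fun v1 v2 => s' * ∑' j, π i j v1 v2 * x j + r i v1 v2 * x i)
    (|s| * (2 * M * C) + rM * C) (|s'| * (2 * M * C) + rM * C) (|s - s'| * (2 * M * C))
    (fun v1 v2 => pair_bound hπoff hπcons hπM hr0 hrM i v1 v2 x s hx hC)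
    (fun v1 v2 => pair_bound hπoff hπcons hπM hr0 hrM i v1 v2 x s' hx hC)
    (fun v1 v2 => ?_)
  · exact h
  · have heq : s * ∑' j, π i j v1 v2 * x j + r i v1 v2 * x i
        - (s' * ∑' j, π i j v1 v2 * x j + r i v1 v2 * x i)
        = (s - s') * ∑' j, π i j v1 v2 * x j := by ring
    rw [heq, abs_mul]
    exact mul_le_mul_of_nonneg_left (row_tsum_bound hπoff hπcons hπM i v1 v2 x hx hC)
      (abs_nonneg _)

end lems

lemma Gam_zero (i : ℕ) (s : ℝ) : Gam π r i (fun _ => (0:ℝ)) s = 0 := by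
  unfold Gam
  have : ∀ (v1 : V1) (v2 : V2),
      s * ∑' j, π i j v1 v2 * (0:ℝ) + r i v1 v2 * (0:ℝ) = 0 := by
    intro v1 v2; simp
  simp only [mul_zero, tsum_zero, add_zero, zero_add, ciSup_const, ciInf_const]

end Gam



section MeasHelpers

variable {g : ℝ → ℝ}

lemma aesm_mono {A B : Set ℝ} (hAB : A ⊆ B)
    (h : AEStronglyMeasurable g (volume.restrict B)) :
    AEStronglyMeasurable g (volume.restrict A) :=
  h.mono_measure (Measure.restrict_mono hAB le_rfl)

lemma aesm_congr_on {A : Set ℝ} (hA : MeasurableSet A) {g' : ℝ → ℝ}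
    (heq : ∀ x ∈ A, g x = g' x)
    (h : AEStronglyMeasurable g (volume.restrict A)) :
    AEStronglyMeasurable g' (volume.restrict A) := by
  refine h.congr ?_
  exact (ae_restrict_iff' hA).2 (Filter.Eventually.of_forall heq)

lemma aesm_union {A B : Set ℝ}
    (hA : AEStronglyMeasurable g (volume.restrict A))
    (hB : AEStronglyMeasurable g (volume.restrict B)) :
    AEStronglyMeasurable g (volume.restrict (A ∪ B)) :=
  aestronglyMeasurable_union_iff.2 ⟨hA, hB⟩

/-- measurability on `Ioc (sInf s) b` from measurability on each `Ioc a b`, `a ∈ s`. -/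
lemma aesm_sInf {s : Set ℝ} {b : ℝ} (hne : s.Nonempty) (hbdd : BddBelow s)
    (h : ∀ a ∈ s, AEStronglyMeasurable g (volume.restrict (Ioc a b))) :
    AEStronglyMeasurable g (volume.restrict (Ioc (sInf s) b)) := by
  have hcov : Ioc (sInf s) b = ⋃ n : ℕ, Ioc (sInf s + 1/(n+1)) b := by
    ext x
    simp only [mem_Ioc, mem_iUnion]
    constructor
    · rintro ⟨hx1, hx2⟩
      obtain ⟨n, hn⟩ := exists_nat_one_div_lt (show 0 < x - sInf s by linarith)
      exact ⟨n, by push_cast at hn ⊢; constructor <;> [linarith; exact hx2]⟩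
    · rintro ⟨n, hn1, hn2⟩
      have : (0:ℝ) < 1/(n+1) := by positivity
      exact ⟨by linarith, hn2⟩
  rw [hcov]
  refine AEStronglyMeasurable.iUnion fun n => ?_
  have hlt : sInf s < sInf s + 1/(n+1) := by
    have : (0:ℝ) < 1/((n:ℝ)+1) := by positivity
    linarith
  obtain ⟨a, has, ha⟩ := exists_lt_of_csInf_lt hne hlt
  exact aesm_mono (Ioc_subset_Ioc_left ha.le) (h a has)

/-- measurability on `Ioc a (sSup s)` from measurability on each `Ioc a b`, `b ∈ s`. -/
lemma aesm_sSup {s : Set ℝ} {a : ℝ} (hne : s.Nonempty) (hbdd : BddAbove s)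
    (h : ∀ b ∈ s, AEStronglyMeasurable g (volume.restrict (Ioc a b))) :
    AEStronglyMeasurable g (volume.restrict (Ioc a (sSup s))) := by
  have h1 : AEStronglyMeasurable g (volume.restrict (Ioo a (sSup s))) := by
    have hcov : Ioo a (sSup s) = ⋃ n : ℕ, Ioc a (sSup s - 1/(n+1)) := by
      ext x
      simp only [mem_Ioo, mem_Ioc, mem_iUnion]
      constructor
      · rintro ⟨hx1, hx2⟩
        obtain ⟨n, hn⟩ := exists_nat_one_div_lt (show 0 < sSup s - x by linarith)
        exact ⟨n, hx1, by push_cast at hn ⊢; linarith⟩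
      · rintro ⟨n, hn1, hn2⟩
        have : (0:ℝ) < 1/((n:ℝ)+1) := by positivity
        exact ⟨hn1, by linarith⟩
    rw [hcov]
    refine AEStronglyMeasurable.iUnion fun n => ?_
    rcases le_or_gt (sSup s - 1/(n+1)) a with hc | hc
    · rw [Ioc_eq_empty (by exact fun h' => absurd h' (not_lt.2 hc))]
      simp [Measure.restrict_empty]
    · have hlt : sSup s - 1/(n+1) < sSup s := by
        have : (0:ℝ) < 1/((n:ℝ)+1) := by positivity
        linarith
      obtain ⟨b, hbs, hb⟩ := exists_lt_of_lt_csSup hne hlt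
      exact aesm_mono (Ioc_subset_Ioc_right hb.le) (h b hbs)
  have : AEStronglyMeasurable g (volume.restrict (Ioc a (sSup s))) := by
    refine AEStronglyMeasurable.mono_measure h1 ?_
    rw [Measure.restrict_congr_set Ioo_ae_eq_Ioc]
  exact this

end MeasHelpers



section Curve
variable {V1 V2 : Type} [Nonempty V1] [Nonempty V2]
variable {M rM : ℝ} {π : ℕ → ℕ → V1 → V2 → ℝ} {r : ℕ → V1 → V2 → ℝ}

lemma Gam_curve_continuousOn
    (hπoff : ∀ i j v1 v2, i ≠ j → 0 ≤ π i j v1 v2)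
    (hπcons : ∀ i v1 v2, HasSum (fun j => π i j v1 v2) 0)
    (hπM : ∀ i v1 v2, -π i i v1 v2 ≤ M)
    (hr0 : ∀ i v1 v2, 0 ≤ r i v1 v2) (hrM : ∀ i v1 v2, r i v1 v2 ≤ rM)
    (i : ℕ) (c : ℝ → ℕ → ℝ) {C L a : ℝ} (ha : 0 < a) (hC : 0 ≤ C) (hL : 0 ≤ L)
    (hc : ∀ u j, |c u j| ≤ C) (D : Set ℝ) (hD : D ⊆ Ici a)
    (hlip : ∀ u ∈ D, ∀ u' ∈ D, ∀ j, |c u j - c u' j| ≤ L * |u - u'|) :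
    ContinuousOn (fun θ => Gam π r i (c θ) (1/θ)) D := by
  set K0 : ℝ := (1/a) * (2 * M * L) + rM * L + (2 * M * C) / a^2 with hK0
  have hrM0 : 0 ≤ rM := le_trans (hr0 0 (Classical.arbitrary V1) (Classical.arbitrary V2))
    (hrM 0 (Classical.arbitrary V1) (Classical.arbitrary V2))
  have hM0 : 0 ≤ M := by
    have h1 := hπM 0 (Classical.arbitrary V1) (Classical.arbitrary V2)
    have h2 : π 0 0 (Classical.arbitrary V1) (Classical.arbitrary V2) ≤ 0 := by
      by_contra hcon
      push_neg at hcon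
      -- π 0 0 > 0, but row sums to 0 with nonneg off-diagonals: sum > 0, contradiction
      have hsum := hπcons 0 (Classical.arbitrary V1) (Classical.arbitrary V2)
      have hge : ∀ j, (0:ℝ) ≤ (fun j => π 0 j (Classical.arbitrary V1) (Classical.arbitrary V2)) j
          → True := fun _ _ => trivial
      have : (0:ℝ) < ∑' j, π 0 j (Classical.arbitrary V1) (Classical.arbitrary V2) := by
        have hnn : ∀ j, 0 ≤ π 0 j (Classical.arbitrary V1) (Classical.arbitrary V2) := by
          intro j
          by_cases hj : (0:ℕ) = j
          · rw [← hj]; exact hcon.le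
          · exact hπoff 0 j _ _ hj
        have hsummable : Summable (fun j => π 0 j (Classical.arbitrary V1) (Classical.arbitrary V2)) := ⟨0, hsum⟩
        calc (0:ℝ) < π 0 0 (Classical.arbitrary V1) (Classical.arbitrary V2) := hcon
          _ ≤ ∑' j, π 0 j (Classical.arbitrary V1) (Classical.arbitrary V2) :=
            Summable.le_tsum hsummable 0 (fun j _ => hnn j)
      rw [hsum.tsum_eq] at this
      exact lt_irrefl 0 this
    linarith
  have hK00 : 0 ≤ K0 := by
    have h1 : (0:ℝ) ≤ (1/a) * (2 * M * L) := by positivity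
    have h2 : (0:ℝ) ≤ rM * L := mul_nonneg hrM0 hL
    have h3 : (0:ℝ) ≤ (2 * M * C) / a^2 := by positivity
    rw [hK0]
    linarith
  have key : ∀ θ ∈ D, ∀ θ' ∈ D,
      |Gam π r i (c θ) (1/θ) - Gam π r i (c θ') (1/θ')| ≤ K0 * |θ - θ'| := by
    intro θ hθ θ' hθ'
    have hθa : a ≤ θ := hD hθ
    have hθ'a : a ≤ θ' := hD hθ'
    have hθ0 : 0 < θ := lt_of_lt_of_le ha hθa
    have hθ'0 : 0 < θ' := lt_of_lt_of_le ha hθ'a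
    have e1 : |Gam π r i (c θ) (1/θ) - Gam π r i (c θ') (1/θ)|
        ≤ |1/θ| * (2 * M * (L * |θ - θ'|)) + rM * (L * |θ - θ'|) :=
      Gam_sub_x hπoff hπcons hπM hr0 hrM i (c θ) (c θ') (1/θ) (hc θ) hC (hc θ') hC
        (fun j => hlip θ hθ θ' hθ' j) (mul_nonneg hL (abs_nonneg _))
    have e2 : |Gam π r i (c θ') (1/θ) - Gam π r i (c θ') (1/θ')|
        ≤ |1/θ - 1/θ'| * (2 * M * C) :=
      Gam_sub_s hπoff hπcons hπM hr0 hrM i (c θ') (1/θ) (1/θ') (hc θ') hC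
    have h1θ : |1/θ| ≤ 1/a := by
      rw [abs_of_pos (by positivity)]
      exact one_div_le_one_div_of_le ha hθa
    have hinv : |1/θ - 1/θ'| ≤ |θ - θ'| / a^2 := by
      have heq : 1/θ - 1/θ' = (θ' - θ) / (θ * θ') := by field_simp
      rw [heq, abs_div]
      rw [abs_of_pos (mul_pos hθ0 hθ'0)]
      have h1 : a^2 ≤ θ * θ' := by nlinarith
      have h2 : |θ' - θ| = |θ - θ'| := abs_sub_comm _ _
      rw [h2, div_le_div_iff₀ (mul_pos hθ0 hθ'0) (by positivity)]
      exact mul_le_mul_of_nonneg_left h1 (abs_nonneg _)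
    calc |Gam π r i (c θ) (1/θ) - Gam π r i (c θ') (1/θ')|
        ≤ |Gam π r i (c θ) (1/θ) - Gam π r i (c θ') (1/θ)|
          + |Gam π r i (c θ') (1/θ) - Gam π r i (c θ') (1/θ')| := abs_sub_le _ _ _
      _ ≤ (|1/θ| * (2 * M * (L * |θ - θ'|)) + rM * (L * |θ - θ'|))
          + |1/θ - 1/θ'| * (2 * M * C) := add_le_add e1 e2
      _ ≤ ((1/a) * (2 * M * (L * |θ - θ'|)) + rM * (L * |θ - θ'|))
          + (|θ - θ'| / a^2) * (2 * M * C) := by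
            refine add_le_add (add_le_add ?_ le_rfl) ?_
            · exact mul_le_mul_of_nonneg_right h1θ (by positivity)
            · exact mul_le_mul_of_nonneg_right hinv (by positivity)
      _ = K0 * |θ - θ'| := by rw [hK0]; ring
  -- continuity from the Lipschitz-type estimate
  intro θ hθ
  refine Metric.continuousWithinAt_iff.2 ?_
  intro ε' hε'
  refine ⟨ε' / (K0 + 1), by positivity, fun θ' hθ' hd => ?_⟩
  have := key θ' hθ' θ hθ
  have hd' : |θ' - θ| < ε' / (K0 + 1) := by
    rwa [Real.dist_eq] at hd
  rw [Real.dist_eq]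
  calc |Gam π r i (c θ') (1/θ') - Gam π r i (c θ) (1/θ)| ≤ K0 * |θ' - θ| := key θ' hθ' θ hθ
    _ ≤ K0 * (ε' / (K0 + 1)) := mul_le_mul_of_nonneg_left hd'.le hK00
    _ < ε' := by
        rw [mul_div_assoc] at *
        have : K0 / (K0 + 1) < 1 := by
          rw [div_lt_one (by linarith)]; linarith
        calc K0 * (ε' / (K0 + 1)) = (K0 / (K0+1)) * ε' := by ring
          _ < 1 * ε' := by exact mul_lt_mul_of_pos_right this hε'
          _ = ε' := one_mul ε'
end Curve



section Adv
variable {V1 V2 : Type} [TopologicalSpace V1] [TopologicalSpace V2]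
  [CompactSpace V1] [CompactSpace V2] [Nonempty V1] [Nonempty V2]

/-- the integrand of the operator `T` -/
noncomputable def hhF (π : ℕ → ℕ → V1 → V2 → ℝ) (r : ℕ → V1 → V2 → ℝ)
    {ε δ : ℝ} (hle : ε ≤ ε + δ)
    (f : BoundedContinuousFunction (Set.Icc ε (ε + δ) × ℕ) ℝ) (i : ℕ) (θ : ℝ) : ℝ :=
  Gam π r i (fun j => Set.IccExtend hle (fun t => f (t, j)) θ) (1/θ)

variable {M rM ε δ α : ℝ} {π : ℕ → ℕ → V1 → V2 → ℝ} {r : ℕ → V1 → V2 → ℝ}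
  {hle : ε ≤ ε + δ}
  {T : BoundedContinuousFunction (Set.Icc ε (ε + δ) × ℕ) ℝ →
       BoundedContinuousFunction (Set.Icc ε (ε + δ) × ℕ) ℝ}

lemma hhF_bound_base
    (hπoff : ∀ i j v1 v2, i ≠ j → 0 ≤ π i j v1 v2)
    (hπcons : ∀ i v1 v2, HasSum (fun j => π i j v1 v2) 0)
    (hπM : ∀ i v1 v2, -π i i v1 v2 ≤ M)
    (hr0 : ∀ i v1 v2, 0 ≤ r i v1 v2) (hrM : ∀ i v1 v2, r i v1 v2 ≤ rM)
    (hM : 0 ≤ M) (hε : 0 < ε)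
    (f : BoundedContinuousFunction (Set.Icc ε (ε + δ) × ℕ) ℝ) (i : ℕ)
    {θ : ℝ} (hθ : ε ≤ θ) :
    |hhF π r hle f i θ| ≤ (1/ε) * (2 * M * ‖f‖) + rM * ‖f‖ := by
  have hxb : ∀ j, |Set.IccExtend hle (fun t => f (t, j)) θ| ≤ ‖f‖ := by
    intro j
    have := f.norm_coe_le_norm (Set.projIcc ε (ε+δ) hle θ, j)
    simpa [Real.norm_eq_abs, Set.IccExtend] using this
  have h1 := Gam_bound hπoff hπcons hπM hr0 hrM i
    (fun j => Set.IccExtend hle (fun t => f (t, j)) θ) (1/θ) hxb (norm_nonneg f)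
  have hsb : |1/θ| ≤ 1/ε := by
    have hθ0 : 0 < θ := lt_of_lt_of_le hε hθ
    rw [abs_of_pos (by positivity)]
    exact one_div_le_one_div_of_le hε hθ
  calc |hhF π r hle f i θ| ≤ |1/θ| * (2 * M * ‖f‖) + rM * ‖f‖ := h1
    _ ≤ (1/ε) * (2 * M * ‖f‖) + rM * ‖f‖ := by
        have : |1/θ| * (2 * M * ‖f‖) ≤ (1/ε) * (2 * M * ‖f‖) :=
          mul_le_mul_of_nonneg_right hsb (by positivity)
        linarith

lemma adversary_bound
    (hπoff : ∀ i j v1 v2, i ≠ j → 0 ≤ π i j v1 v2)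
    (hπcons : ∀ i v1 v2, HasSum (fun j => π i j v1 v2) 0)
    (hπM : ∀ i v1 v2, -π i i v1 v2 ≤ M)
    (hr0 : ∀ i v1 v2, 0 ≤ r i v1 v2) (hrM : ∀ i v1 v2, r i v1 v2 ≤ rM)
    (hM : 0 ≤ M) (hε : 0 < ε) (hα : 0 < α)
    (hT' : ∀ f (η : Set.Icc ε (ε + δ)) (i : ℕ),
      T f (η, i) = Real.exp (ε / α * rM) + (1 / α) *
        ∫ θ in ε..(η : ℝ), hhF π r hle f i θ)
    (f : BoundedContinuousFunction (Set.Icc ε (ε + δ) × ℕ) ℝ) (i : ℕ)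
    (y : ℕ → ℝ) (Cy : ℝ) (hy : ∀ j, |y j| ≤ Cy) (hCy : 0 ≤ Cy)
    (m lam : ℝ) (hm : ε < m) (hlam : 0 < lam) (ht : m + lam ≤ ε + δ)
    (hbad : ¬ AEStronglyMeasurable (hhF π r hle f i)
      (volume.restrict (Ioc (m + lam) (ε + δ)))) :
    |∫ θ in ε..m, Gam π r i y (1/θ)| ≤
      lam * (((1/ε) * (2 * M * (Cy + ‖f‖)) + rM * (Cy + ‖f‖))
        + ((1/ε) * (2 * M * ‖f‖) + rM * ‖f‖)) := by
  have hrM0 : 0 ≤ rM := le_trans (hr0 0 (Classical.arbitrary V1) (Classical.arbitrary V2))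
    (hrM 0 (Classical.arbitrary V1) (Classical.arbitrary V2))
  set t := m + lam with htdef
  have hεt : ε < t := by simp only [htdef]; linarith
  have htI : t ∈ Icc ε (ε+δ) := ⟨hεt.le, ht⟩
  have hδpos : ε < ε + δ := lt_of_lt_of_le hεt ht
  -- the good set from time t
  set SS : Set ℝ := {η | η ∈ Icc t (ε+δ) ∧
    AEStronglyMeasurable (hhF π r hle f i) (volume.restrict (Ioc t η))} with hSSdef
  have htSS : t ∈ SS := by
    refine ⟨⟨le_rfl, ht⟩, ?_⟩
    rw [Ioc_self, Measure.restrict_empty]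
    exact aestronglyMeasurable_zero_measure _
  have hSSne : SS.Nonempty := ⟨t, htSS⟩
  have hSSbdd : BddAbove SS := ⟨ε+δ, fun b hb => hb.1.2⟩
  set σt := sSup SS with hσdef
  have hσmem : σt ∈ Icc t (ε+δ) :=
    ⟨le_csSup hSSbdd htSS, csSup_le hSSne (fun b hb => hb.1.2)⟩
  have hσmeas : AEStronglyMeasurable (hhF π r hle f i) (volume.restrict (Ioc t σt)) :=
    aesm_sSup hSSne hSSbdd (fun b hb => hb.2)
  have hσlt : σt < ε + δ := by
    rcases lt_or_eq_of_le hσmem.2 with h | h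
    · exact h
    · exfalso; rw [← h] at hbad; exact hbad hσmeas
  have hσbad : ∀ η, σt < η → η ≤ ε + δ →
      ¬ AEStronglyMeasurable (hhF π r hle f i) (volume.restrict (Ioc t η)) := by
    intro η hη1 hη2 hcon
    have : η ∈ SS := ⟨⟨le_trans hσmem.1 hη1.le, hη2⟩, hcon⟩
    exact absurd (le_csSup hSSbdd this) (not_le.2 hη1)
  set P := ∫ θ in t..σt, hhF π r hle f i θ with hPdef
  -- the key adversary estimate
  have key : ∀ (y' : ℕ → ℝ) (Cy' : ℝ), (∀ j, |y' j| ≤ Cy') → 0 ≤ Cy' →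
      |(∫ θ in ε..m, Gam π r i y' (1/θ)) + P| ≤
        lam * ((1/ε) * (2 * M * (Cy' + ‖f‖)) + rM * (Cy' + ‖f‖)) := by
    intro y' Cy' hy' hCy'
    set CB := Cy' + ‖f‖ with hCBdef
    have hCB0 : 0 ≤ CB := by positivity
    -- ramp
    set ρ : ℝ → ℝ := fun u => max 0 (min 1 ((u - m)/lam)) with hρdef
    have hρcont : Continuous ρ := by
      apply Continuous.max continuous_const
      exact Continuous.min continuous_const (by fun_prop)
    have hρ0 : ∀ u, u ≤ m → ρ u = 0 := by
      intro u hu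
      have h1 : (u - m)/lam ≤ 0 := div_nonpos_iff.2 (Or.inr ⟨by linarith, hlam.le⟩)
      simp only [hρdef]
      rw [max_eq_left]
      exact le_trans (min_le_right _ _) h1
    have hρ1 : ∀ u, t ≤ u → ρ u = 1 := by
      intro u hu
      have h1 : (1:ℝ) ≤ (u - m)/lam := by
        rw [le_div_iff₀ hlam]; simp only [htdef] at hu; linarith
      simp only [hρdef]
      rw [min_eq_left h1, max_eq_right zero_le_one]
    have hρmem : ∀ u, 0 ≤ ρ u ∧ ρ u ≤ 1 := by
      intro u
      constructor
      · exact le_max_left _ _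
      · simp only [hρdef]
        rw [max_le_iff]
        exact ⟨zero_le_one, min_le_left _ _⟩
    have hρlip : ∀ u u', |ρ u - ρ u'| ≤ |u - u'| / lam := by
      intro u u'
      have h1 : |ρ u - ρ u'| ≤ |min 1 ((u - m)/lam) - min 1 ((u' - m)/lam)| := by
        simp only [hρdef]
        have := abs_max_sub_max_le_abs (min 1 ((u - m)/lam)) (min 1 ((u' - m)/lam)) 0
        simpa [max_comm] using this
      have h2 : |min 1 ((u - m)/lam) - min 1 ((u' - m)/lam)| ≤ |(u - m)/lam - (u' - m)/lam| := by
        have := abs_min_sub_min_le_max 1 ((u - m)/lam) 1 ((u' - m)/lam)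
        simpa using this
      have h3 : (u - m)/lam - (u' - m)/lam = (u - u')/lam := by ring
      calc |ρ u - ρ u'| ≤ |min 1 ((u - m)/lam) - min 1 ((u' - m)/lam)| := h1
        _ ≤ |(u - m)/lam - (u' - m)/lam| := h2
        _ = |u - u'| / lam := by rw [h3, abs_div, abs_of_pos hlam]
    -- the adversary function
    have hmemmax : ∀ p : Icc ε (ε+δ) × ℕ, max (p.1 : ℝ) t ∈ Icc ε (ε+δ) :=
      fun p => ⟨le_max_of_le_left p.1.2.1, max_le p.1.2.2 ht⟩
    set wf : (Icc ε (ε+δ) × ℕ) → ℝ :=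
      fun p => (1 - ρ p.1) * y' p.2 + ρ p.1 * f (⟨max (p.1 : ℝ) t, hmemmax p⟩, p.2) with hwfdef
    have hwfcont : Continuous wf := by
      apply Continuous.add
      · apply Continuous.mul
        · exact continuous_const.sub (hρcont.comp (continuous_subtype_val.comp continuous_fst))
        · exact (continuous_of_discreteTopology (f := y')).comp continuous_snd
      · apply Continuous.mul
        · exact hρcont.comp (continuous_subtype_val.comp continuous_fst)
        · refine f.continuous.comp (Continuous.prodMk ?_ continuous_snd)
          exact Continuous.subtype_mk
            ((continuous_subtype_val.comp continuous_fst).max continuous_const) _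
    have hwfb : ∀ p, ‖wf p‖ ≤ CB := by
      intro p
      have h1 : |(1 - ρ p.1) * y' p.2| ≤ Cy' := by
        rw [abs_mul]
        have hρp := hρmem p.1
        have : |1 - ρ (p.1:ℝ)| ≤ 1 := by rw [abs_le]; constructor <;> linarith [hρp.1, hρp.2]
        calc |1 - ρ (p.1:ℝ)| * |y' p.2| ≤ 1 * Cy' :=
          mul_le_mul this (hy' p.2) (abs_nonneg _) zero_le_one
        _ = Cy' := one_mul _
      have h2 : |ρ (p.1:ℝ) * f (⟨max (p.1 : ℝ) t, hmemmax p⟩, p.2)| ≤ ‖f‖ := by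
        rw [abs_mul]
        have hρp := hρmem p.1
        have hf := f.norm_coe_le_norm (⟨max (p.1 : ℝ) t, hmemmax p⟩, p.2)
        rw [Real.norm_eq_abs] at hf
        calc |ρ (p.1:ℝ)| * |f (⟨max (p.1 : ℝ) t, hmemmax p⟩, p.2)| ≤ 1 * ‖f‖ := by
              refine mul_le_mul ?_ hf (abs_nonneg _) zero_le_one
              rw [abs_of_nonneg hρp.1]; exact hρp.2
          _ = ‖f‖ := one_mul _
      rw [Real.norm_eq_abs, hwfdef]
      calc |(1 - ρ p.1) * y' p.2 + ρ p.1 * f (⟨max (p.1 : ℝ) t, hmemmax p⟩, p.2)|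
          ≤ |(1 - ρ p.1) * y' p.2| + |ρ p.1 * f (⟨max (p.1 : ℝ) t, hmemmax p⟩, p.2)| := abs_add_le _ _
        _ ≤ Cy' + ‖f‖ := add_le_add h1 h2
    set w : BoundedContinuousFunction (Icc ε (ε+δ) × ℕ) ℝ :=
      BoundedContinuousFunction.ofNormedAddCommGroup wf hwfcont CB hwfb with hwdef
    have hwcoe : ∀ p, w p = wf p := fun p => rfl
    -- extension identity
    have hXw : ∀ (θ : ℝ) (hθ : θ ∈ Icc ε (ε+δ)), ∀ j : ℕ,
        Set.IccExtend hle (fun t' => w (t', j)) θ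
        = (1 - ρ θ) * y' j
          + ρ θ * f (⟨max θ t, ⟨le_max_of_le_left hθ.1, max_le hθ.2 ht⟩⟩, j) := by
      intro θ hθ j
      rw [Set.IccExtend_of_mem hle _ hθ]
      rfl
    -- global bound for the extension of w
    have hXwb : ∀ (θ : ℝ) (j : ℕ), |Set.IccExtend hle (fun t' => w (t', j)) θ| ≤ CB := by
      intro θ j
      have h := hwfb (Set.projIcc ε (ε+δ) hle θ, j)
      rw [Real.norm_eq_abs] at h
      exact h
    -- identity on [ε, m]
    have hidA : ∀ (θ : ℝ), θ ∈ Icc ε m → hhF π r hle w i θ = Gam π r i y' (1/θ) := by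
      intro θ hθ
      have hθI : θ ∈ Icc ε (ε+δ) := ⟨hθ.1, le_trans hθ.2 (le_trans (by linarith) ht)⟩
      unfold hhF
      congr 1
      funext j
      rw [hXw θ hθI j, hρ0 θ hθ.2]
      ring
    -- identity on [t, ε+δ]
    have hidB : ∀ (θ : ℝ), θ ∈ Icc t (ε+δ) → hhF π r hle w i θ = hhF π r hle f i θ := by
      intro θ hθ
      have hθI : θ ∈ Icc ε (ε+δ) := ⟨le_trans hεt.le hθ.1, hθ.2⟩
      unfold hhF
      congr 1
      funext j
      rw [hXw θ hθI j, hρ1 θ hθ.1]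
      rw [Set.IccExtend_of_mem hle _ hθI]
      have e : (⟨max θ t, ⟨le_max_of_le_left hθI.1, max_le hθI.2 ht⟩⟩ : Icc ε (ε+δ))
          = ⟨θ, hθI⟩ := Subtype.ext (max_eq_left hθ.1)
      rw [e]
      ring
    -- Lipschitz estimate on [ε, t]
    have hlipA : ∀ u ∈ Icc ε t, ∀ u' ∈ Icc ε t, ∀ j : ℕ,
        |Set.IccExtend hle (fun t' => w (t', j)) u - Set.IccExtend hle (fun t' => w (t', j)) u'|
          ≤ (CB/lam) * |u - u'| := by
      intro u hu u' hu' j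
      have huI : u ∈ Icc ε (ε+δ) := ⟨hu.1, le_trans hu.2 ht⟩
      have hu'I : u' ∈ Icc ε (ε+δ) := ⟨hu'.1, le_trans hu'.2 ht⟩
      rw [hXw u huI j, hXw u' hu'I j]
      have eu : (⟨max u t, ⟨le_max_of_le_left huI.1, max_le huI.2 ht⟩⟩ : Icc ε (ε+δ))
          = ⟨t, htI⟩ := Subtype.ext (max_eq_right hu.2)
      have eu' : (⟨max u' t, ⟨le_max_of_le_left hu'I.1, max_le hu'I.2 ht⟩⟩ : Icc ε (ε+δ))
          = ⟨t, htI⟩ := Subtype.ext (max_eq_right hu'.2)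
      rw [eu, eu']
      set z := f (⟨t, htI⟩, j) with hzdef
      have heq : (1 - ρ u) * y' j + ρ u * z - ((1 - ρ u') * y' j + ρ u' * z)
          = (ρ u - ρ u') * (z - y' j) := by ring
      rw [heq, abs_mul]
      have hz : |z - y' j| ≤ CB := by
        have h1 : |z| ≤ ‖f‖ := by
          have := f.norm_coe_le_norm (⟨t, htI⟩, j)
          rwa [Real.norm_eq_abs] at this
        calc |z - y' j| ≤ |z| + |y' j| := abs_sub _ _
          _ ≤ ‖f‖ + Cy' := add_le_add h1 (hy' j)
          _ = CB := by rw [hCBdef]; ring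
      calc |ρ u - ρ u'| * |z - y' j| ≤ (|u - u'|/lam) * CB :=
            mul_le_mul (hρlip u u') hz (abs_nonneg _) (by positivity)
        _ = (CB/lam) * |u - u'| := by field_simp
    -- continuity of hhF w on [ε, t]
    have contA : ContinuousOn (fun θ => hhF π r hle w i θ) (Icc ε t) := by
      have hcc := Gam_curve_continuousOn hπoff hπcons hπM hr0 hrM i
        (fun u j => Set.IccExtend hle (fun t' => w (t', j)) u)
        (C := CB) (L := CB/lam) (a := ε) hε hCB0 (by positivity)
        (fun u j => hXwb u j) (Icc ε t) (fun u hu => hu.1) hlipA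
      exact hcc
    -- bound for hhF w
    set BW := (1/ε) * (2*M*CB) + rM * CB with hBWdef
    have hhwb : ∀ (x : ℝ), ε ≤ x → |hhF π r hle w i x| ≤ BW := by
      intro x hx
      have hx0 : 0 < x := lt_of_lt_of_le hε hx
      have h1 := Gam_bound hπoff hπcons hπM hr0 hrM i
        (fun j => Set.IccExtend hle (fun t' => w (t', j)) x) (1/x)
        (fun j => hXwb x j) hCB0
      have hsb : |1/x| ≤ 1/ε := by
        rw [abs_of_pos (by positivity)]
        exact one_div_le_one_div_of_le hε hx
      have h2 : |1/x| * (2*M*CB) ≤ (1/ε) * (2*M*CB) :=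
        mul_le_mul_of_nonneg_right hsb (by positivity)
      have h3 : |hhF π r hle w i x| ≤ |1/x| * (2 * M * CB) + rM * CB := h1
      rw [hBWdef]
      linarith
    -- non-integrability of hhF w beyond σt
    have hbad_w : ∀ η, σt < η → η ≤ ε + δ →
        ¬ IntervalIntegrable (fun θ => hhF π r hle w i θ) volume ε η := by
      intro η h1 h2 hcon
      have hεη : ε ≤ η := le_trans (le_trans hεt.le hσmem.1) h1.le
      have hInt : IntegrableOn (fun θ => hhF π r hle w i θ) (Ioc ε η) volume :=
        (intervalIntegrable_iff_integrableOn_Ioc_of_le hεη).1 hcon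
      have haesm : AEStronglyMeasurable (fun θ => hhF π r hle w i θ)
          (volume.restrict (Ioc t η)) :=
        aesm_mono (Ioc_subset_Ioc_left hεt.le) hInt.aestronglyMeasurable
      have : AEStronglyMeasurable (hhF π r hle f i) (volume.restrict (Ioc t η)) := by
        refine aesm_congr_on measurableSet_Ioc (fun x hx => ?_) haesm
        exact hidB x ⟨hx.1.le, le_trans hx.2 h2⟩
      exact hσbad η h1 h2 this
    have hTw_after : ∀ (η : ℝ) (hηI : η ∈ Icc ε (ε+δ)), σt < η →
        T w (⟨η, hηI⟩, i) = Real.exp (ε / α * rM) := by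
      intro η hηI h1
      rw [hT' w ⟨η, hηI⟩ i]
      rw [intervalIntegral.integral_undef (hbad_w η h1 hηI.2)]
      ring
    -- continuity pin at σt
    have hσI : σt ∈ Icc ε (ε+δ) := ⟨le_trans hεt.le hσmem.1, hσmem.2⟩
    have hpin : T w (⟨σt, hσI⟩, i) = Real.exp (ε / α * rM) := by
      set ψ : ℝ → ℝ := fun u => T w (Set.projIcc ε (ε+δ) hle u, i) with hψdef
      have hψcont : Continuous ψ := by
        apply (T w).continuous.comp
        exact (continuous_projIcc).prodMk continuous_const
      have hclosed : IsClosed {u : ℝ | ψ u = Real.exp (ε / α * rM)} :=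
        isClosed_eq hψcont continuous_const
      have hsub : Ioc σt (ε+δ) ⊆ {u : ℝ | ψ u = Real.exp (ε / α * rM)} := by
        intro u hu
        have huI : u ∈ Icc ε (ε+δ) := ⟨le_trans hσI.1 hu.1.le, hu.2⟩
        have hproj : Set.projIcc ε (ε+δ) hle u = ⟨u, huI⟩ := Set.projIcc_of_mem hle huI
        show ψ u = Real.exp (ε / α * rM)
        rw [hψdef]
        simp only [hproj]
        exact hTw_after u huI hu.1
      have hclos : σt ∈ closure (Ioc σt (ε+δ)) := by
        rw [closure_Ioc (ne_of_lt hσlt)]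
        exact ⟨le_rfl, hσlt.le⟩
      have hmem2 : σt ∈ {u : ℝ | ψ u = Real.exp (ε / α * rM)} :=
        closure_minimal hsub hclosed hclos
      have hproj : Set.projIcc ε (ε+δ) hle σt = ⟨σt, hσI⟩ := Set.projIcc_of_mem hle hσI
      have := hmem2
      rw [Set.mem_setOf_eq, hψdef] at this
      simp only [hproj] at this
      exact this
    -- the integral up to σt vanishes
    have hInt0 : ∫ θ in ε..σt, hhF π r hle w i θ = 0 := by
      have h2 := hpin.symm.trans (hT' w ⟨σt, hσI⟩ i)
      have h3 : (1/α) * ∫ θ in ε..σt, hhF π r hle w i θ = 0 := by linarith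
      rcases mul_eq_zero.1 h3 with h | h
      · exact absurd h (one_div_ne_zero (ne_of_gt hα))
      · exact h
    -- integrability pieces
    have hmt : m ≤ t := by rw [htdef]; linarith
    have ii1 : IntervalIntegrable (fun θ => hhF π r hle w i θ) volume ε m := by
      apply ContinuousOn.intervalIntegrable
      rw [uIcc_of_le hm.le]
      exact contA.mono (Icc_subset_Icc le_rfl hmt)
    have ii2 : IntervalIntegrable (fun θ => hhF π r hle w i θ) volume m t := by
      apply ContinuousOn.intervalIntegrable
      rw [uIcc_of_le hmt]
      exact contA.mono (Icc_subset_Icc hm.le le_rfl)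
    have measB : AEStronglyMeasurable (fun θ => hhF π r hle w i θ)
        (volume.restrict (Ioc t σt)) := by
      refine aesm_congr_on measurableSet_Ioc (fun x hx => ?_) hσmeas
      exact (hidB x ⟨hx.1.le, le_trans hx.2 hσmem.2⟩).symm
    have ii3 : IntervalIntegrable (fun θ => hhF π r hle w i θ) volume t σt := by
      rw [intervalIntegrable_iff_integrableOn_Ioc_of_le hσmem.1]
      refine Integrable.mono' (g := fun _ => BW) ?_ measB ?_
      · exact integrableOn_const measure_Ioc_lt_top.ne
      · refine (ae_restrict_iff' measurableSet_Ioc).2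
          (Filter.Eventually.of_forall (fun x hx => ?_))
        rw [Real.norm_eq_abs]
        exact hhwb x (le_trans hεt.le hx.1.le)
    -- splitting
    have hsplit1 : ∫ θ in ε..m, hhF π r hle w i θ = ∫ θ in ε..m, Gam π r i y' (1/θ) := by
      apply intervalIntegral.integral_congr
      intro x hx
      rw [uIcc_of_le hm.le] at hx
      exact hidA x hx
    have hsplit3 : ∫ θ in t..σt, hhF π r hle w i θ = P := by
      rw [hPdef]
      apply intervalIntegral.integral_congr
      intro x hx
      rw [uIcc_of_le hσmem.1] at hx
      exact hidB x ⟨hx.1, le_trans hx.2 hσmem.2⟩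
    have hadj : (∫ θ in ε..m, hhF π r hle w i θ) + (∫ θ in m..t, hhF π r hle w i θ)
        + (∫ θ in t..σt, hhF π r hle w i θ) = ∫ θ in ε..σt, hhF π r hle w i θ := by
      rw [intervalIntegral.integral_add_adjacent_intervals ii1 ii2]
      exact intervalIntegral.integral_add_adjacent_intervals (ii1.trans ii2) ii3
    -- blend bound
    have hblend : |∫ θ in m..t, hhF π r hle w i θ| ≤ BW * lam := by
      have hb := intervalIntegral.norm_integral_le_of_norm_le_const
        (C := BW) (f := fun θ => hhF π r hle w i θ) (a := m) (b := t) ?_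
      · rw [Real.norm_eq_abs] at hb
        have habs : |t - m| = lam := by
          rw [htdef]
          simp only [add_sub_cancel_left]
          exact abs_of_pos hlam
        rwa [habs] at hb
      · intro x hx
        rw [Set.uIoc_of_le hmt] at hx
        rw [Real.norm_eq_abs]
        exact hhwb x (le_trans hm.le hx.1.le)
    -- conclude
    have heqn : (∫ θ in ε..m, Gam π r i y' (1/θ)) + P = - ∫ θ in m..t, hhF π r hle w i θ := by
      rw [← hsplit1, ← hsplit3]
      have := hadj.trans hInt0
      linarith
    rw [heqn, abs_neg]
    calc |∫ θ in m..t, hhF π r hle w i θ| ≤ BW * lam := hblend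
      _ = lam * ((1/ε) * (2 * M * (Cy' + ‖f‖)) + rM * (Cy' + ‖f‖)) := by
          rw [hBWdef, hCBdef]; ring
  -- apply the key estimate twice
  have k1 := key y Cy hy hCy
  have k2 := key (fun _ => (0:ℝ)) 0 (fun j => by simp) le_rfl
  have hF0 : (∫ θ in ε..m, Gam π r i (fun _ => (0:ℝ)) (1/θ)) = 0 := by
    have hz : ∀ θ : ℝ, Gam π r i (fun _ => (0:ℝ)) (1/θ) = 0 :=
      fun θ => Gam_zero (V1 := V1) (V2 := V2) i (1/θ)
    simp only [hz, intervalIntegral.integral_zero]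
  rw [hF0, zero_add] at k2
  have htri : |∫ θ in ε..m, Gam π r i y (1/θ)|
      ≤ |(∫ θ in ε..m, Gam π r i y (1/θ)) + P| + |P| := by
    have := abs_add_le ((∫ θ in ε..m, Gam π r i y (1/θ)) + P) (-P)
    simpa using this
  calc |∫ θ in ε..m, Gam π r i y (1/θ)|
      ≤ |(∫ θ in ε..m, Gam π r i y (1/θ)) + P| + |P| := htri
    _ ≤ lam * ((1/ε) * (2 * M * (Cy + ‖f‖)) + rM * (Cy + ‖f‖))
        + lam * ((1/ε) * (2 * M * ((0:ℝ) + ‖f‖)) + rM * ((0:ℝ) + ‖f‖)) := add_le_add k1 k2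
    _ = lam * (((1/ε) * (2 * M * (Cy + ‖f‖)) + rM * (Cy + ‖f‖))
        + ((1/ε) * (2 * M * ‖f‖) + rM * ‖f‖)) := by ring


end Adv



section MainMeas
variable {V1 V2 : Type} [TopologicalSpace V1] [TopologicalSpace V2]
  [CompactSpace V1] [CompactSpace V2] [Nonempty V1] [Nonempty V2]
variable {M rM ε δ α : ℝ} {π : ℕ → ℕ → V1 → V2 → ℝ} {r : ℕ → V1 → V2 → ℝ}
  {hle : ε ≤ ε + δ}
  {T : BoundedContinuousFunction (Set.Icc ε (ε + δ) × ℕ) ℝ →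
       BoundedContinuousFunction (Set.Icc ε (ε + δ) × ℕ) ℝ}

lemma main_meas
    (hπoff : ∀ i j v1 v2, i ≠ j → 0 ≤ π i j v1 v2)
    (hπcons : ∀ i v1 v2, HasSum (fun j => π i j v1 v2) 0)
    (hπM : ∀ i v1 v2, -π i i v1 v2 ≤ M)
    (hr0 : ∀ i v1 v2, 0 ≤ r i v1 v2) (hrM : ∀ i v1 v2, r i v1 v2 ≤ rM)
    (hM : 0 ≤ M) (hε : 0 < ε) (hα : 0 < α)
    (hT' : ∀ f (η : Set.Icc ε (ε + δ)) (i : ℕ),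
      T f (η, i) = Real.exp (ε / α * rM) + (1 / α) *
        ∫ θ in ε..(η : ℝ), hhF π r hle f i θ)
    (f : BoundedContinuousFunction (Set.Icc ε (ε + δ) × ℕ) ℝ) (i : ℕ) :
    AEStronglyMeasurable (hhF π r hle f i) (volume.restrict (Ioc ε (ε + δ))) := by
  have hrM0 : 0 ≤ rM := le_trans (hr0 0 (Classical.arbitrary V1) (Classical.arbitrary V2))
    (hrM 0 (Classical.arbitrary V1) (Classical.arbitrary V2))
  set S : Set ℝ := {a | a ∈ Icc ε (ε+δ) ∧
    AEStronglyMeasurable (hhF π r hle f i) (volume.restrict (Ioc a (ε+δ)))} with hSdef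
  have hTne : (ε+δ) ∈ S := by
    refine ⟨⟨hle, le_rfl⟩, ?_⟩
    rw [Ioc_self, Measure.restrict_empty]
    exact aestronglyMeasurable_zero_measure _
  have hSne : S.Nonempty := ⟨_, hTne⟩
  have hSbdd : BddBelow S := ⟨ε, fun a ha => ha.1.1⟩
  set astar := sInf S with hadef
  have hastar_mem : astar ∈ Icc ε (ε+δ) :=
    ⟨le_csInf hSne (fun a ha => ha.1.1), csInf_le hSbdd hTne⟩
  have hmeas_tail : AEStronglyMeasurable (hhF π r hle f i)
      (volume.restrict (Ioc astar (ε+δ))) :=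
    aesm_sInf hSne hSbdd (fun a ha => ha.2)
  rcases eq_or_lt_of_le hastar_mem.1 with heps | heps
  · rwa [← heps] at hmeas_tail
  · have hbad : ∀ a, ε < a → a < astar →
        ¬ AEStronglyMeasurable (hhF π r hle f i) (volume.restrict (Ioc a (ε+δ))) := by
      intro a h1 h2 hcon
      have : a ∈ S := ⟨⟨h1.le, le_trans h2.le hastar_mem.2⟩, hcon⟩
      exact absurd (csInf_le hSbdd this) (not_le.2 h2)
    have hFzero : ∀ (y : ℕ → ℝ) (Cy : ℝ), (∀ j, |y j| ≤ Cy) → 0 ≤ Cy →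
        ∀ m, ε < m → m < astar → (∫ θ in ε..m, Gam π r i y (1/θ)) = 0 := by
      intro y Cy hy hCy m hm1 hm2
      by_contra hne
      set F := ∫ θ in ε..m, Gam π r i y (1/θ) with hFdef
      set B2 : ℝ := ((1/ε) * (2*M*(Cy + ‖f‖)) + rM * (Cy + ‖f‖))
        + ((1/ε) * (2*M*‖f‖) + rM*‖f‖) with hB2
      have hB2nonneg : 0 ≤ B2 := by
        rw [hB2]
        have h1 : (0:ℝ) ≤ (1/ε) * (2*M*(Cy + ‖f‖)) := by positivity
        have h2 : (0:ℝ) ≤ rM * (Cy + ‖f‖) := by positivity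
        have h3 : (0:ℝ) ≤ (1/ε) * (2*M*‖f‖) := by positivity
        have h4 : (0:ℝ) ≤ rM * ‖f‖ := by positivity
        linarith
      have hFpos : 0 < |F| := abs_pos.2 hne
      set lam := min ((astar - m)/2) (|F| / (2 * (B2+1))) with hlamdef
      have hlampos : 0 < lam := by
        apply lt_min
        · linarith
        · positivity
      have hlam2 : lam ≤ (astar - m)/2 := min_le_left _ _
      have hlt : m + lam < astar := by linarith
      have hb := adversary_bound hπoff hπcons hπM hr0 hrM hM hε hα hT' f i y Cy hy hCy
        m lam hm1 hlampos (by linarith [hastar_mem.2]) (hbad (m+lam) (by linarith) hlt)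
      rw [← hFdef, ← hB2] at hb
      have h2 : lam ≤ |F| / (2*(B2+1)) := min_le_right _ _
      have h3 : |F| ≤ (|F| / (2*(B2+1))) * B2 :=
        le_trans hb (mul_le_mul_of_nonneg_right h2 hB2nonneg)
      have h4 : (|F| / (2*(B2+1))) * B2 < |F| := by
        rw [div_mul_eq_mul_div, div_lt_iff₀ (by linarith)]
        nlinarith
      linarith
    have hzero : ∀ θ0, θ0 ∈ Ioo ε astar → hhF π r hle f i θ0 = 0 := by
      intro θ0 hθ0
      set y : ℕ → ℝ := fun j => Set.IccExtend hle (fun t => f (t, j)) θ0 with hydef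
      have hyb : ∀ j, |y j| ≤ ‖f‖ := by
        intro j
        have := f.norm_coe_le_norm (Set.projIcc ε (ε+δ) hle θ0, j)
        rw [Real.norm_eq_abs] at this
        exact this
      set g : ℝ → ℝ := fun θ => Gam π r i y (1/θ) with hgdef
      have hgcont : ContinuousOn g (Ioi (ε/2)) := by
        have := Gam_curve_continuousOn hπoff hπcons hπM hr0 hrM i
          (fun _ j => y j) (C := ‖f‖) (L := 0) (a := ε/2)
          (by positivity) (norm_nonneg f) le_rfl
          (fun u j => hyb j) (Ioi (ε/2)) (fun u hu => mem_Ici.2 (le_of_lt hu))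
          (fun u hu u' hu' j => by simp)
        exact this
      have hθ0mem : θ0 ∈ Ioi (ε/2) := by
        have := hθ0.1
        simp only [mem_Ioi]
        linarith
      have hii : IntervalIntegrable g volume ε θ0 := by
        apply ContinuousOn.intervalIntegrable
        refine hgcont.mono ?_
        rw [uIcc_of_le hθ0.1.le]
        intro x hx
        simp only [mem_Ioi]
        have := hx.1
        linarith
      have hFder : HasDerivAt (fun u => ∫ θ in ε..u, g θ) (g θ0) θ0 :=
        intervalIntegral.integral_hasDerivAt_right hii
          (hgcont.stronglyMeasurableAtFilter isOpen_Ioi θ0 hθ0mem)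
          (hgcont.continuousAt (isOpen_Ioi.mem_nhds hθ0mem))
      have hF0 : (fun u => ∫ θ in ε..u, g θ) =ᶠ[nhds θ0] (fun _ => (0:ℝ)) := by
        filter_upwards [Ioo_mem_nhds hθ0.1 hθ0.2] with u hu
        exact hFzero y ‖f‖ hyb (norm_nonneg f) u hu.1 hu.2
      have hder0 : HasDerivAt (fun u => ∫ θ in ε..u, g θ) 0 θ0 := by
        have h0 : HasDerivAt (fun _ : ℝ => (0:ℝ)) 0 θ0 := hasDerivAt_const θ0 0
        exact h0.congr_of_eventuallyEq hF0
      exact hFder.unique hder0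
    have h1 : AEStronglyMeasurable (hhF π r hle f i) (volume.restrict (Ioc ε astar)) := by
      rw [← Measure.restrict_congr_set Ioo_ae_eq_Ioc]
      refine aesm_congr_on measurableSet_Ioo (fun x hx => (hzero x hx).symm) ?_
      exact aestronglyMeasurable_const
    have hU := aesm_union h1 hmeas_tail
    rwa [Ioc_union_Ioc_eq_Ioc hastar_mem.1 hastar_mem.2] at hU

end MainMeas


/-- The fixed-point operator for the discounted risk-sensitive HJI equation is Lipschitz with
constant `(1/α)(‖r‖∞ δ + 2M ln(1+δ/ε))`, and hence a contraction with a unique fixed point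
when this constant is `< 1`. -/
theorem stmt_0
    (α ε δ M rM : ℝ) (hα : 0 < α) (hε : 0 < ε) (hδ : 0 < δ) (hM : 0 ≤ M)
    (hle : ε ≤ ε + δ)
    (V1 V2 : Type) [TopologicalSpace V1] [TopologicalSpace V2]
    [CompactSpace V1] [CompactSpace V2] [Nonempty V1] [Nonempty V2]
    (π : ℕ → ℕ → V1 → V2 → ℝ) (r : ℕ → V1 → V2 → ℝ)
    (hπoff : ∀ i j v1 v2, i ≠ j → 0 ≤ π i j v1 v2)
    (hπcons : ∀ i v1 v2, HasSum (fun j => π i j v1 v2) 0)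
    (hπM : ∀ i v1 v2, -π i i v1 v2 ≤ M)
    (hr0 : ∀ i v1 v2, 0 ≤ r i v1 v2) (hrM : ∀ i v1 v2, r i v1 v2 ≤ rM)
    (T : BoundedContinuousFunction (Set.Icc ε (ε + δ) × ℕ) ℝ →
         BoundedContinuousFunction (Set.Icc ε (ε + δ) × ℕ) ℝ)
    (hT : ∀ f (η : Set.Icc ε (ε + δ)) (i : ℕ),
      T f (η, i) = Real.exp (ε / α * rM) + (1 / α) *
        ∫ θ in ε..(η : ℝ), ⨅ v1 : V1, ⨆ v2 : V2,
          ((1 / θ) * ∑' j : ℕ, π i j v1 v2 * Set.IccExtend hle (fun t => f (t, j)) θ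
            + r i v1 v2 * Set.IccExtend hle (fun t => f (t, i)) θ)) :
    (∀ f1 f2, ‖T f1 - T f2‖ ≤ (1 / α) * (rM * δ + 2 * M * Real.log (1 + δ / ε)) * ‖f1 - f2‖)
    ∧ ((1 / α) * (rM * δ + 2 * M * Real.log (1 + δ / ε)) < 1 → ∃! f, T f = f) := by
  have hrM0 : 0 ≤ rM := le_trans (hr0 0 (Classical.arbitrary V1) (Classical.arbitrary V2))
    (hrM 0 (Classical.arbitrary V1) (Classical.arbitrary V2))
  have hT' : ∀ f (η : Set.Icc ε (ε + δ)) (i : ℕ),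
      T f (η, i) = Real.exp (ε / α * rM) + (1 / α) *
        ∫ θ in ε..(η : ℝ), hhF π r hle f i θ := by
    intro f η i
    rw [hT f η i]
    rfl
  have hlog0 : 0 ≤ Real.log (1 + δ / ε) := Real.log_nonneg (by
    have : 0 ≤ δ / ε := by positivity
    linarith)
  have hL0 : 0 ≤ (1 / α) * (rM * δ + 2 * M * Real.log (1 + δ / ε)) := by
    have h1 : 0 ≤ rM * δ := by positivity
    have h2 : 0 ≤ 2 * M * Real.log (1 + δ / ε) := by positivity
    have h3 : 0 ≤ 1/α := by positivity
    nlinarith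
  -- integrability of the integrand
  have hInt : ∀ (f : BoundedContinuousFunction (Set.Icc ε (ε + δ) × ℕ) ℝ) (i : ℕ) (η : ℝ),
      η ∈ Icc ε (ε+δ) → IntervalIntegrable (hhF π r hle f i) volume ε η := by
    intro f i η hη
    rw [intervalIntegrable_iff_integrableOn_Ioc_of_le hη.1]
    refine Integrable.mono' (g := fun _ => (1/ε) * (2 * M * ‖f‖) + rM * ‖f‖)
      (integrableOn_const measure_Ioc_lt_top.ne)
      (aesm_mono (Ioc_subset_Ioc_right hη.2)
        (main_meas hπoff hπcons hπM hr0 hrM hM hε hα hT' f i)) ?_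
    refine (ae_restrict_iff' measurableSet_Ioc).2
      (Filter.Eventually.of_forall (fun x hx => ?_))
    rw [Real.norm_eq_abs]
    exact hhF_bound_base hπoff hπcons hπM hr0 hrM hM hε f i hx.1.le
  -- main Lipschitz estimate
  have key : ∀ f1 f2, ‖T f1 - T f2‖ ≤
      (1 / α) * (rM * δ + 2 * M * Real.log (1 + δ / ε)) * ‖f1 - f2‖ := by
    intro f1 f2
    set K := ‖f1 - f2‖ with hKdef
    have hK0 : 0 ≤ K := norm_nonneg _
    refine (BoundedContinuousFunction.norm_le (by positivity)).2 ?_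
    rintro ⟨η, i⟩
    have hηI : (η:ℝ) ∈ Icc ε (ε+δ) := η.2
    have hηle : ε ≤ (η:ℝ) := hηI.1
    rw [BoundedContinuousFunction.coe_sub, Pi.sub_apply]
    have hval1 := hT' f1 η i
    have hval2 := hT' f2 η i
    set I1 := ∫ θ in ε..(η:ℝ), hhF π r hle f1 i θ with hI1
    set I2 := ∫ θ in ε..(η:ℝ), hhF π r hle f2 i θ with hI2
    rw [hval1, hval2, Real.norm_eq_abs]
    have he : Real.exp (ε/α*rM) + (1/α) * I1 - (Real.exp (ε/α*rM) + (1/α) * I2)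
        = (1/α) * (I1 - I2) := by ring
    rw [he, abs_mul, abs_of_pos (show (0:ℝ) < 1/α by positivity)]
    -- pointwise bound on the difference of integrands
    have hptw : ∀ θ ∈ Icc ε (η:ℝ),
        |hhF π r hle f1 i θ - hhF π r hle f2 i θ| ≤ (1/θ) * (2*M*K) + rM*K := by
      intro θ hθ
      have hθ0 : 0 < θ := lt_of_lt_of_le hε hθ.1
      have hb1 : ∀ j, |Set.IccExtend hle (fun t => f1 (t, j)) θ| ≤ ‖f1‖ := by
        intro j
        have := f1.norm_coe_le_norm (Set.projIcc ε (ε+δ) hle θ, j)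
        rwa [Real.norm_eq_abs] at this
      have hb2 : ∀ j, |Set.IccExtend hle (fun t => f2 (t, j)) θ| ≤ ‖f2‖ := by
        intro j
        have := f2.norm_coe_le_norm (Set.projIcc ε (ε+δ) hle θ, j)
        rwa [Real.norm_eq_abs] at this
      have hdiff : ∀ j, |Set.IccExtend hle (fun t => f1 (t, j)) θ
          - Set.IccExtend hle (fun t => f2 (t, j)) θ| ≤ K := by
        intro j
        have h := (f1 - f2).norm_coe_le_norm (Set.projIcc ε (ε+δ) hle θ, j)
        rw [Real.norm_eq_abs, BoundedContinuousFunction.coe_sub, Pi.sub_apply] at h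
        exact h
      have h := Gam_sub_x hπoff hπcons hπM hr0 hrM i
        (fun j => Set.IccExtend hle (fun t => f1 (t, j)) θ)
        (fun j => Set.IccExtend hle (fun t => f2 (t, j)) θ)
        (1/θ) hb1 (norm_nonneg f1) hb2 (norm_nonneg f2) hdiff hK0
      rw [abs_of_pos (show (0:ℝ) < 1/θ by positivity)] at h
      exact h
    -- integral comparison
    have hd_int : IntervalIntegrable (fun θ => hhF π r hle f1 i θ - hhF π r hle f2 i θ)
        volume ε η := (hInt f1 i η hηI).sub (hInt f2 i η hηI)
    have hc_cont : ContinuousOn (fun θ : ℝ => (1/θ) * (2*M*K) + rM*K) (Icc ε (η:ℝ)) := by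
      apply ContinuousOn.add
      · apply ContinuousOn.mul
        · exact continuousOn_const.div continuousOn_id
            (fun x hx => ne_of_gt (lt_of_lt_of_le hε hx.1))
        · exact continuousOn_const
      · exact continuousOn_const
    have hc_int : IntervalIntegrable (fun θ : ℝ => (1/θ) * (2*M*K) + rM*K) volume ε η := by
      apply ContinuousOn.intervalIntegrable
      rwa [uIcc_of_le hηle]
    have hIsub : I1 - I2 = ∫ θ in ε..(η:ℝ),
        (hhF π r hle f1 i θ - hhF π r hle f2 i θ) :=
      (intervalIntegral.integral_sub (hInt f1 i η hηI) (hInt f2 i η hηI)).symm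
    have habs : |I1 - I2| ≤ ∫ θ in ε..(η:ℝ), ((1/θ) * (2*M*K) + rM*K) := by
      rw [hIsub, abs_le]
      constructor
      · rw [← intervalIntegral.integral_neg]
        refine intervalIntegral.integral_mono_on hηle hc_int.neg hd_int (fun x hx => ?_)
        have h1 := (abs_le.1 (hptw x hx)).1
        linarith
      · refine intervalIntegral.integral_mono_on hηle hd_int hc_int (fun x hx => ?_)
        exact (abs_le.1 (hptw x hx)).2
    -- compute the bounding integral
    have hii1 : IntervalIntegrable (fun θ : ℝ => (1/θ) * (2*M*K)) volume ε η := by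
      apply ContinuousOn.intervalIntegrable
      rw [uIcc_of_le hηle]
      apply ContinuousOn.mul
      · exact continuousOn_const.div continuousOn_id
          (fun x hx => ne_of_gt (lt_of_lt_of_le hε hx.1))
      · exact continuousOn_const
    have hcval : ∫ θ in ε..(η:ℝ), ((1/θ) * (2*M*K) + rM*K)
        = Real.log ((η:ℝ)/ε) * (2*M*K) + ((η:ℝ) - ε) * (rM*K) := by
      rw [intervalIntegral.integral_add hii1 intervalIntegrable_const]
      rw [intervalIntegral.integral_mul_const]
      rw [integral_one_div (by
        intro hmem
        rw [uIcc_of_le hηle] at hmem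
        exact absurd hmem.1 (not_le.2 hε))]
      rw [intervalIntegral.integral_const, smul_eq_mul]
    have hlog : Real.log ((η:ℝ)/ε) ≤ Real.log (1 + δ/ε) := by
      have he2 : (1 : ℝ) + δ/ε = (ε+δ)/ε := by field_simp
      rw [he2]
      apply Real.log_le_log (div_pos (lt_of_lt_of_le hε hηle) hε)
      gcongr
      exact hηI.2
    have hfin : ∫ θ in ε..(η:ℝ), ((1/θ) * (2*M*K) + rM*K)
        ≤ Real.log (1 + δ/ε) * (2*M*K) + δ * (rM*K) := by
      rw [hcval]
      have h1 : Real.log ((η:ℝ)/ε) * (2*M*K) ≤ Real.log (1 + δ/ε) * (2*M*K) :=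
        mul_le_mul_of_nonneg_right hlog (by positivity)
      have h2 : ((η:ℝ) - ε) * (rM*K) ≤ δ * (rM*K) := by
        have : (η:ℝ) - ε ≤ δ := by have := hηI.2; linarith
        exact mul_le_mul_of_nonneg_right this (by positivity)
      linarith
    calc (1/α) * |I1 - I2| ≤ (1/α) * (Real.log (1 + δ/ε) * (2*M*K) + δ * (rM*K)) := by
          refine mul_le_mul_of_nonneg_left (le_trans habs hfin) (by positivity)
      _ = (1 / α) * (rM * δ + 2 * M * Real.log (1 + δ / ε)) * K := by ring
  refine ⟨key, ?_⟩
  intro hcontr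
  have hlip : LipschitzWith (Real.toNNReal ((1 / α) * (rM * δ + 2 * M * Real.log (1 + δ / ε)))) T := by
    apply LipschitzWith.of_dist_le_mul
    intro f1 f2
    rw [dist_eq_norm, dist_eq_norm, Real.coe_toNNReal _ hL0]
    exact key f1 f2
  have hcw : ContractingWith
      (Real.toNNReal ((1 / α) * (rM * δ + 2 * M * Real.log (1 + δ / ε)))) T := by
    constructor
    · rw [← NNReal.coe_lt_coe, Real.coe_toNNReal _ hL0, NNReal.coe_one]
      exact hcontr
    · exact hlip
  exact ⟨ContractingWith.fixedPoint T hcw, hcw.fixedPoint_isFixedPt,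
    fun g hg => hcw.fixedPoint_unique hg⟩
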